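/- Let F have characteristic 2, t = 2^τ, and n ≡ 2k + t mod 2^{τ+1} with t ≤ k and k + t ≤ n. Then FΩ_k = ker φ_t^k ⊕ im φ_t^{k⋆} and ker φ_t^k = im φ_t^{k+t}, where φ_t^k : FΩ_k → FΩ_{k−t} sends each k-subset to the sum of its (k−t)-subsets, φ_t^{k+t} : FΩ_{k+t} → FΩ_k likewise, and φ_t^{k⋆} : FΩ_{k−t} → FΩ_k sends each (k−t)-subset to the sum of k-subsets containing it. -/

import Mathlib

/-- The free `F`-vector space on the `k`-element subsets of `{1,…,n}` (here `k : ℤ`,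
so that the space is zero for `k < 0`). -/
def FOmega (F : Type*) [Field F] (n : ℕ) (k : ℤ) : Type _ :=
  {s : Finset (Fin n) // (s.card : ℤ) = k} →₀ F

noncomputable instance (F : Type*) [Field F] (n : ℕ) (k : ℤ) :
    AddCommGroup (FOmega F n k) := Finsupp.instAddCommGroup

noncomputable instance (F : Type*) [Field F] (n : ℕ) (k : ℤ) :
    Module F (FOmega F n k) := Finsupp.module _ _

/-- The multistep boundary map `FΩ_a → FΩ_b`, sending a subset `Y` of size `a`
to the sum of all its subsets of size `b` (this is `φ_t^a` with `t = a - b`). -/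
noncomputable def phi (F : Type*) [Field F] (n : ℕ) (a b : ℤ) :
    FOmega F n a →ₗ[F] FOmega F n b :=
  Finsupp.lift _ F _ fun Y =>
    ∑ X ∈ (Y.1.powerset.filter fun X => (X.card : ℤ) = b).attach,
      Finsupp.single ⟨X.1, (Finset.mem_filter.mp X.2).2⟩ (1 : F)

/-- The dual multistep map `FΩ_a → FΩ_b` (for `b ≥ a`), sending a subset `Y` of size
`a` to the sum of all subsets of size `b` containing it. -/
noncomputable def phiStar (F : Type*) [Field F] (n : ℕ) (a b : ℤ) :
    FOmega F n a →ₗ[F] FOmega F n b :=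
  Finsupp.lift _ F _ fun Y =>
    ∑ Z ∈ Finset.univ.filter
        (fun Z : {s : Finset (Fin n) // (s.card : ℤ) = b} => Y.1 ⊆ Z.1),
      Finsupp.single Z (1 : F)


open Finset

/-! ### Parity lemmas -/

private lemma lucas2 (m r : ℕ) :
    m.choose r % 2 = (m % 2).choose (r % 2) * ((m / 2).choose (r / 2)) % 2 := by
  haveI : Fact (Nat.Prime 2) := ⟨Nat.prime_two⟩
  exact Choose.choose_modEq_choose_mod_mul_choose_div_nat

private lemma parity_congr : ∀ (τ m m' r : ℕ), m % 2 ^ τ = m' % 2 ^ τ → r < 2 ^ τ →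
    m.choose r % 2 = m'.choose r % 2
  | 0, m, m', r, _, hr => by
      have : r = 0 := by simpa using hr
      subst this; simp
  | τ + 1, m, m', r, h, hr => by
      have hm2 : m % 2 = m' % 2 := by
        rw [← Nat.mod_mod_of_dvd m (dvd_pow_self 2 τ.succ_ne_zero), h,
          Nat.mod_mod_of_dvd m' (dvd_pow_self 2 τ.succ_ne_zero)]
      have hdiv : m / 2 % 2 ^ τ = m' / 2 % 2 ^ τ := by
        rw [← Nat.mod_mul_right_div_self, ← pow_succ', h, pow_succ',
          Nat.mod_mul_right_div_self]
      have hr2 : r / 2 < 2 ^ τ := by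
        rw [pow_succ'] at hr
        exact Nat.div_lt_of_lt_mul hr
      rw [lucas2 m r, lucas2 m' r, hm2, Nat.mul_mod,
        parity_congr τ (m / 2) (m' / 2) (r / 2) hdiv hr2, ← Nat.mul_mod]

private lemma parity_pow : ∀ (τ m : ℕ), m.choose (2 ^ τ) % 2 = m / 2 ^ τ % 2
  | 0, m => by simp
  | τ + 1, m => by
      rw [lucas2]
      have h1 : 2 ^ (τ + 1) % 2 = 0 := by simp [pow_succ]
      have h2 : 2 ^ (τ + 1) / 2 = 2 ^ τ := by
        rw [pow_succ, Nat.mul_div_cancel]; norm_num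
      rw [h1, h2, Nat.choose_zero_right, one_mul, parity_pow τ (m / 2),
        Nat.div_div_eq_div_mul, ← pow_succ']

private lemma bit_eq (τ m : ℕ) : m / 2 ^ τ % 2 = m % 2 ^ (τ + 1) / 2 ^ τ := by
  rw [pow_succ, Nat.mod_mul_right_div_self]

/-! ### The master counting/parity lemma -/

private lemma master (n A c τ N1 N2 : ℕ) (hc : c ≤ A) (hAn : A + 2 ^ τ ≤ n)
    (hmod : n % 2 ^ (τ + 1) = (2 * A + 2 ^ τ) % 2 ^ (τ + 1))
    (hN1a : 2 ^ τ ≤ A → N1 = c.choose (A - 2 ^ τ))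
    (hN1b : A < 2 ^ τ → N1 = 0)
    (hN2a : A ≤ c + 2 ^ τ → N2 = (n - (2 * A - c)).choose (A + 2 ^ τ - (2 * A - c)))
    (hN2b : c + 2 ^ τ < A → N2 = 0) :
    (N1 + N2) % 2 = (if c = A then 1 else 0) % 2 := by
  set t := 2 ^ τ with ht
  have htpos : 0 < t := pow_pos (by norm_num) τ
  have hdvd : (t : ℤ) ∣ (n : ℤ) - 2 * A := by
    have h1 : (n : ℕ) ≡ 2 * A + t [MOD 2 ^ (τ + 1)] := hmod
    have h2 := (Nat.modEq_iff_dvd.mp h1)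
    have h3 : (t : ℤ) ∣ ((2 * A + t : ℕ) : ℤ) - (n : ℤ) := by
      refine dvd_trans ?_ h2
      rw [ht]; push_cast [pow_succ]
      exact Dvd.intro 2 rfl
    have h4 : (t : ℤ) ∣ ((2 * A + t : ℕ) : ℤ) - (n : ℤ) - t := (dvd_sub h3 dvd_rfl)
    have : ((2 * A + t : ℕ) : ℤ) - (n : ℤ) - t = -((n : ℤ) - 2 * A) := by push_cast; ring
    rw [this] at h4
    exact (dvd_neg.mp h4)
  by_cases hcA : c = A
  · subst hcA
    have hu1 : 2 * c - c = c := by omega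
    have hN2 : N2 = (n - c).choose t := by
      have := hN2a (by omega)
      rw [hu1] at this
      rw [this]
      congr 1
      omega
    have hbit : (n - c) / t % 2 = (c / t + 1) % 2 := by
      have hmc : (n - c) % 2 ^ (τ + 1) = (c + t) % 2 ^ (τ + 1) := by
        have h1 : (n - c) + c ≡ (c + t) + c [MOD 2 ^ (τ + 1)] := by
          have : (n - c) + c = n := by omega
          rw [this]
          calc n ≡ 2 * c + t [MOD 2 ^ (τ + 1)] := hmod
            _ = (c + t) + c := by ring
        exact Nat.ModEq.add_right_cancel' c h1
      rw [bit_eq, hmc, ← bit_eq]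
      have : (c + t) / t = c / t + 1 := by
        rw [Nat.add_div_right c htpos]
      rw [this]
    have hN1 : N1 % 2 = c / t % 2 := by
      by_cases h : t ≤ c
      · rw [hN1a h, Nat.choose_symm h, ht, parity_pow]
      · rw [hN1b (by omega), Nat.div_eq_of_lt (by omega)]
    rw [if_pos rfl, Nat.add_mod, hN1, hN2, ht, parity_pow, ← ht, hbit]
    omega
  · rw [if_neg hcA]
    have hclt : c < A := lt_of_le_of_ne hc hcA
    by_cases hjt : A ≤ c + t
    · set r := c + t - A with hr
      have hrlt : r < t := by omega
      have hN1 : N1 % 2 = c.choose r % 2 := by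
        by_cases h : t ≤ A
        · have e : A - t = c - r := by omega
          rw [hN1a h, e, Nat.choose_symm (by omega)]
        · rw [hN1b (by omega), Nat.choose_eq_zero_of_lt (by omega)]
      have hN2 : N2 = (n - (2 * A - c)).choose r := by
        rw [hN2a hjt]
        congr 1
        omega
      have hcong : (n - (2 * A - c)) % 2 ^ τ = c % 2 ^ τ := by
        have h1 : (n - (2 * A - c) : ℕ) ≡ c [MOD t] := by
          rw [Nat.modEq_iff_dvd]
          have e : (c : ℤ) - ((n - (2 * A - c) : ℕ) : ℤ) = -((n:ℤ) - 2 * A) := by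
            have h2 : (2 * A - c : ℕ) ≤ n := by omega
            have h3 : ((n - (2 * A - c) : ℕ) : ℤ) = (n : ℤ) - (2 * A - c : ℕ) := by
              exact_mod_cast Int.ofNat_sub h2
            have h4 : ((2 * A - c : ℕ) : ℤ) = 2 * (A : ℤ) - c := by omega
            rw [h3, h4]; ring
          rw [e]
          exact dvd_neg.mpr hdvd
        exact h1
      rw [Nat.add_mod, hN1, hN2, parity_congr τ _ c r hcong (by omega)]
      omega
    · have hN1 : N1 = 0 := by
        by_cases h : t ≤ A
        · rw [hN1a h]
          exact Nat.choose_eq_zero_of_lt (by omega)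
        · exact hN1b (by omega)
      rw [hN1, hN2b (by omega)]

/-! ### Counting lemmas -/

private lemma card_filter_powerset {α : Type*} [DecidableEq α] (S : Finset α) (m : ℕ) :
    ((S.powerset.filter fun X => (X.card : ℤ) = (m : ℤ)).card) = S.card.choose m := by
  rw [← Finset.card_powersetCard, Finset.powersetCard_eq_filter]
  congr 1
  ext X
  simp [Finset.mem_filter]

private lemma card_between {α : Type*} [DecidableEq α] (X Z : Finset α) (m : ℕ)
    (hXZ : X ⊆ Z) (hXm : X.card ≤ m) :
    (Z.powerset.filter fun M => (M.card : ℤ) = (m : ℤ) ∧ X ⊆ M).card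
      = (Z.card - X.card).choose (m - X.card) := by
  rw [← Finset.card_sdiff_of_subset hXZ, ← Finset.card_powersetCard]
  apply Finset.card_bij' (fun M _ => M \ X) (fun S _ => S ∪ X)
  · intro M hM
    obtain ⟨hMZ, hMc, hXM⟩ := by
      simpa [Finset.mem_filter, Finset.mem_powerset] using hM
    have hMc' : M.card = m := by exact_mod_cast hMc
    rw [Finset.mem_powersetCard]
    exact ⟨Finset.sdiff_subset_sdiff hMZ Finset.Subset.rfl,
      by rw [Finset.card_sdiff_of_subset hXM, hMc']⟩
  · intro S hS
    obtain ⟨hSZ, hSc⟩ := Finset.mem_powersetCard.mp hS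
    have hdisj : Disjoint S X := Finset.disjoint_of_subset_left hSZ Finset.sdiff_disjoint
    rw [Finset.mem_filter, Finset.mem_powerset]
    refine ⟨Finset.union_subset (hSZ.trans Finset.sdiff_subset) hXZ, ?_, Finset.subset_union_right⟩
    rw [Finset.card_union_of_disjoint hdisj, hSc]
    push_cast
    omega
  · intro M hM
    obtain ⟨-, -, hXM⟩ := by
      simpa [Finset.mem_filter, Finset.mem_powerset] using hM
    exact Finset.sdiff_union_of_subset hXM
  · intro S hS
    obtain ⟨hSZ, -⟩ := Finset.mem_powersetCard.mp hS
    exact Finset.union_sdiff_cancel_right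
      (Finset.disjoint_of_subset_left hSZ Finset.sdiff_disjoint)

private lemma card_subtype_between {n : ℕ} (b : ℤ) (X Z : Finset (Fin n)) :
    (Finset.univ.filter
        fun W : {s : Finset (Fin n) // (s.card : ℤ) = b} => X ⊆ W.1 ∧ W.1 ⊆ Z).card
      = (Z.powerset.filter fun M => (M.card : ℤ) = b ∧ X ⊆ M).card := by
  apply Finset.card_bij (fun W _ => W.1)
  · intro W hW
    obtain ⟨hXW, hWZ⟩ := (Finset.mem_filter.mp hW).2
    rw [Finset.mem_filter, Finset.mem_powerset]
    exact ⟨hWZ, W.2, hXW⟩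
  · intro W₁ _ W₂ _ h
    exact Subtype.ext h
  · intro M hM
    obtain ⟨hMZ, hMc, hXM⟩ := by
      simpa [Finset.mem_filter, Finset.mem_powerset] using hM
    exact ⟨⟨M, hMc⟩, Finset.mem_filter.mpr ⟨Finset.mem_univ _, hXM, hMZ⟩, rfl⟩

/-! ### Coefficient computations for `phi` and `phiStar` -/

abbrev SubT (n : ℕ) (b : ℤ) := {s : Finset (Fin n) // (s.card : ℤ) = b}

section CoeffLayer

variable {F : Type*} [Field F] {n : ℕ}

/-- Identity cast from `FOmega` to the underlying `Finsupp` type. -/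
private def toF {F : Type*} [Field F] {n : ℕ} {b : ℤ} (x : FOmega F n b) :
    SubT n b →₀ F := x

/-- Coefficient of an element of `FOmega`. -/
private def cf {F : Type*} [Field F] {n : ℕ} {b : ℤ} (x : FOmega F n b) (Z : SubT n b) : F :=
  toF x Z

private lemma cf_single {b : ℤ} (W Z : SubT n b) (c : F) :
    cf (Finsupp.single W c : SubT n b →₀ F) Z = if W = Z then c else 0 :=
  Finsupp.single_apply

private lemma cf_add {b : ℤ} (x y : FOmega F n b) (Z : SubT n b) :
    cf (x + y) Z = cf x Z + cf y Z := rfl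

private lemma cf_zero {b : ℤ} (Z : SubT n b) : cf (0 : FOmega F n b) Z = 0 := rfl

private lemma fo_sum_apply {ι : Type*} {b : ℤ} (s : Finset ι) (f : ι → FOmega F n b)
    (Z : SubT n b) :
    cf (∑ i ∈ s, f i) Z = ∑ i ∈ s, cf (f i) Z :=
  Finsupp.finset_sum_apply s f Z

private lemma fo_ext {b : ℤ} {x y : FOmega F n b}
    (h : ∀ Z : SubT n b, cf x Z = cf y Z) : x = y :=
  Finsupp.ext h

private lemma phi_single (a b : ℤ) (Y : SubT n a) :
    phi F n a b (Finsupp.single Y (1 : F))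
      = (∑ X ∈ (Y.1.powerset.filter fun X => (X.card : ℤ) = b).attach,
          (id (Finsupp.single (⟨X.1, (Finset.mem_filter.mp X.2).2⟩ : SubT n b) (1 : F)) : FOmega F n b)) := by
  rw [phi]
  erw [Finsupp.lift_apply, Finsupp.sum_single_index] <;> simp
  rfl

private lemma phiStar_single (a b : ℤ) (Y : SubT n a) :
    phiStar F n a b (Finsupp.single Y (1 : F))
      = (∑ Z ∈ Finset.univ.filter (fun Z : SubT n b => Y.1 ⊆ Z.1),
          (id (Finsupp.single Z (1 : F)) : FOmega F n b)) := by
  rw [phiStar]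
  erw [Finsupp.lift_apply, Finsupp.sum_single_index] <;> simp
  rfl

private lemma phi_single_apply (a b : ℤ) (Y : SubT n a) (X : SubT n b) :
    cf (phi F n a b (Finsupp.single Y (1 : F))) X
      = if X.1 ⊆ Y.1 then 1 else 0 := by
  rw [phi_single, fo_sum_apply]
  have : ∀ X' : {M // M ∈ Y.1.powerset.filter fun X => (X.card : ℤ) = b},
      cf (Finsupp.single (⟨X'.1, (Finset.mem_filter.mp X'.2).2⟩ : SubT n b) (1 : F)) X
        = if X'.1 = X.1 then 1 else 0 := by
    intro X'
    rw [cf_single]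
    congr 1
    simp [Subtype.ext_iff]
  erw [Finset.sum_congr rfl fun X' _ => this X',
    Finset.sum_attach _ (fun u => if u = X.1 then (1 : F) else 0),
    Finset.sum_ite_eq']
  simp only [Finset.mem_filter, Finset.mem_powerset, X.2, and_true]

private lemma phiStar_single_apply (a b : ℤ) (Y : SubT n a) (Z : SubT n b) :
    cf (phiStar F n a b (Finsupp.single Y (1 : F))) Z
      = if Y.1 ⊆ Z.1 then 1 else 0 := by
  rw [phiStar_single, fo_sum_apply]
  have : ∀ W ∈ Finset.univ.filter (fun W : SubT n b => Y.1 ⊆ W.1),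
      cf (Finsupp.single W (1 : F)) Z = if W = Z then 1 else 0 := by
    intro W _
    rw [cf_single]
  erw [Finset.sum_congr rfl this, Finset.sum_ite_eq']
  simp [Finset.mem_filter]

private lemma phiStar_phi_apply (a b : ℤ) (Y Z : SubT n a) :
    cf (phiStar F n b a (phi F n a b (Finsupp.single Y (1 : F)))) Z
      = (((Y.1 ∩ Z.1).powerset.filter fun X => (X.card : ℤ) = b).card : F) := by
  rw [phi_single, map_sum, fo_sum_apply]
  erw [Finset.sum_congr rfl fun X' _ => phiStar_single_apply b a _ Z]
  rw [Finset.sum_attach _ (fun u => if u ⊆ Z.1 then (1 : F) else 0), Finset.sum_boole]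
  congr 2
  rw [Finset.filter_filter]
  ext M
  simp only [Finset.mem_filter, Finset.mem_powerset, Finset.subset_inter_iff]
  tauto

private lemma phi_phiStar_apply (a b : ℤ) (Y Z : SubT n a) :
    cf (phi F n b a (phiStar F n a b (Finsupp.single Y (1 : F)))) Z
      = ((Finset.univ.filter fun W : SubT n b => Y.1 ∪ Z.1 ⊆ W.1).card : F) := by
  rw [phiStar_single, map_sum, fo_sum_apply]
  erw [Finset.sum_congr rfl fun W _ => phi_single_apply b a W Z, Finset.sum_boole]
  congr 2
  rw [Finset.filter_filter]
  ext W
  simp only [Finset.mem_filter, Finset.mem_univ, true_and, Finset.union_subset_iff]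

private lemma phi_phi_apply (a b c : ℤ) (Y : SubT n a) (X : SubT n c) :
    cf (phi F n b c (phi F n a b (Finsupp.single Y (1 : F)))) X
      = ((Y.1.powerset.filter fun M => (M.card : ℤ) = b ∧ X.1 ⊆ M).card : F) := by
  rw [phi_single, map_sum, fo_sum_apply]
  erw [Finset.sum_congr rfl fun M _ => phi_single_apply b c _ X]
  rw [Finset.sum_attach _ (fun u => if X.1 ⊆ u then (1 : F) else 0), Finset.sum_boole]
  congr 2
  rw [Finset.filter_filter]

private lemma phiStar_phiStar_apply (a b c : ℤ) (Y : SubT n a) (Z : SubT n c) :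
    cf (phiStar F n b c (phiStar F n a b (Finsupp.single Y (1 : F)))) Z
      = ((Finset.univ.filter fun W : SubT n b => Y.1 ⊆ W.1 ∧ W.1 ⊆ Z.1).card : F) := by
  rw [phiStar_single, map_sum, fo_sum_apply]
  erw [Finset.sum_congr rfl fun W _ => phiStar_single_apply b c W Z, Finset.sum_boole]
  congr 2
  rw [Finset.filter_filter]

private lemma lmap_ext {a b : ℤ} {f g : FOmega F n a →ₗ[F] FOmega F n b}
    (h : ∀ (Y : SubT n a) (Z : SubT n b),
      cf (f (Finsupp.single Y 1)) Z = cf (g (Finsupp.single Y 1)) Z) : f = g := by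
  apply Finsupp.lhom_ext (M := F) (N := FOmega F n b)
  intro Y c
  have hs : (Finsupp.single Y c : FOmega F n a) = c • (Finsupp.single Y 1 : SubT n a →₀ F) := by
    rw [Finsupp.smul_single, smul_eq_mul, mul_one]
  erw [hs, map_smul, map_smul]
  congr 1
  exact fo_ext (h Y)

end CoeffLayer

/-! ### The key identities -/

private lemma key_identity (F : Type*) [Field F] [CharP F 2] (n τ : ℕ) (a : ℤ)
    (hAn : a + 2 ^ τ ≤ (n : ℤ))
    (hmod : (n : ℤ) % 2 ^ (τ + 1) = (2 * a + 2 ^ τ) % 2 ^ (τ + 1)) :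
    (phiStar F n (a - 2 ^ τ) a).comp (phi F n a (a - 2 ^ τ))
      + (phi F n (a + 2 ^ τ) a).comp (phiStar F n a (a + 2 ^ τ)) = LinearMap.id := by
  apply lmap_ext
  intro Y Z
  show cf (phiStar F n (a - 2 ^ τ) a (phi F n a (a - 2 ^ τ) (Finsupp.single Y 1))
      + phi F n (a + 2 ^ τ) a (phiStar F n a (a + 2 ^ τ) (Finsupp.single Y 1))) Z
    = cf (Finsupp.single Y 1 : SubT n a →₀ F) Z
  rw [cf_add, phiStar_phi_apply, phi_phiStar_apply, cf_single]
  have hcast : ((2 ^ τ : ℕ) : ℤ) = 2 ^ τ := by push_cast; ring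
  set A := Y.1.card with hAdef
  have hA : (A : ℤ) = a := Y.2
  have hZA : Z.1.card = A := by
    have := Z.2
    omega
  set c := (Y.1 ∩ Z.1).card with hcdef
  have hc : c ≤ A := Finset.card_le_card Finset.inter_subset_left
  have hu : c + (Y.1 ∪ Z.1).card = A + A := by
    rw [hcdef, Finset.card_inter_add_card_union, hZA]
  have hAn' : A + 2 ^ τ ≤ n := by omega
  have hmodn : n % 2 ^ (τ + 1) = (2 * A + 2 ^ τ) % 2 ^ (τ + 1) := by
    have h1 : (n : ℤ) % 2 ^ (τ + 1) = (2 * (A : ℤ) + 2 ^ τ) % 2 ^ (τ + 1) := by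
      rw [hA]; exact hmod
    exact_mod_cast h1
  -- identify the `if` condition
  have hiff : (Y = Z) ↔ c = A := by
    constructor
    · rintro rfl
      simp [hcdef, hZA]
    · intro h
      have h1 : Y.1 ∩ Z.1 = Y.1 :=
        Finset.eq_of_subset_of_card_le Finset.inter_subset_left (by omega)
      have h2 : Y.1 ⊆ Z.1 := by
        rw [← h1]; exact Finset.inter_subset_right
      exact Subtype.ext (Finset.eq_of_subset_of_card_le h2 (by omega))
  rw [if_congr hiff rfl rfl]
  -- the two cardinalities
  have hN1a : 2 ^ τ ≤ A →
      ((Y.1 ∩ Z.1).powerset.filter fun X => (X.card : ℤ) = a - 2 ^ τ).card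
        = c.choose (A - 2 ^ τ) := by
    intro h
    have e : a - 2 ^ τ = ((A - 2 ^ τ : ℕ) : ℤ) := by omega
    rw [e, card_filter_powerset]
  have hN1b : A < 2 ^ τ →
      ((Y.1 ∩ Z.1).powerset.filter fun X => (X.card : ℤ) = a - 2 ^ τ).card = 0 := by
    intro h
    rw [Finset.card_eq_zero, Finset.filter_eq_empty_iff]
    intro X _
    intro hX
    have : (0 : ℤ) ≤ (X.card : ℤ) := by positivity
    omega
  have hN2a : A ≤ c + 2 ^ τ →
      (Finset.univ.filter fun W : SubT n (a + 2 ^ τ) => Y.1 ∪ Z.1 ⊆ W.1).card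
        = (n - (2 * A - c)).choose (A + 2 ^ τ - (2 * A - c)) := by
    intro h
    have e0 : (Finset.univ.filter fun W : SubT n (a + 2 ^ τ) => Y.1 ∪ Z.1 ⊆ W.1)
        = (Finset.univ.filter
            fun W : SubT n (a + 2 ^ τ) => Y.1 ∪ Z.1 ⊆ W.1 ∧ W.1 ⊆ Finset.univ) := by
      apply Finset.filter_congr
      intro W _
      simp [Finset.subset_univ]
    rw [e0, card_subtype_between]
    have e1 : a + 2 ^ τ = ((A + 2 ^ τ : ℕ) : ℤ) := by omega
    rw [e1, card_between _ _ _ (Finset.subset_univ _) (by omega)]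
    have e2 : (Finset.univ : Finset (Fin n)).card = n := by
      rw [Finset.card_univ, Fintype.card_fin]
    rw [e2]
    congr 2 <;> omega
  have hN2b : c + 2 ^ τ < A →
      (Finset.univ.filter fun W : SubT n (a + 2 ^ τ) => Y.1 ∪ Z.1 ⊆ W.1).card = 0 := by
    intro h
    rw [Finset.card_eq_zero, Finset.filter_eq_empty_iff]
    intro W _
    intro hW
    have h1 := Finset.card_le_card hW
    have h2 := W.2
    omega
  have hfin := master n A c τ _ _ hc hAn' hmodn hN1a hN1b hN2a hN2b
  have e3 : ((if c = A then 1 else 0 : F)) = (((if c = A then 1 else 0 : ℕ) : ℕ) : F) := by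
    split <;> simp
  rw [e3, ← Nat.cast_add]
  exact CharP.natCast_eq_natCast' F 2 hfin

private lemma even_card_between {F : Type*} [Field F] [CharP F 2] {n : ℕ} (τ : ℕ)
    (X Z : Finset (Fin n)) (b : ℤ)
    (hb : b = (X.card : ℤ) + 2 ^ τ) (hZ : (Z.card : ℤ) = (X.card : ℤ) + 2 ^ τ + 2 ^ τ) :
    (((Z.powerset.filter fun M => (M.card : ℤ) = b ∧ X ⊆ M).card : ℕ) : F) = 0 := by
  have hcast : ((2 ^ τ : ℕ) : ℤ) = 2 ^ τ := by push_cast; ring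
  by_cases hXZ : X ⊆ Z
  · have e : b = ((X.card + 2 ^ τ : ℕ) : ℤ) := by omega
    rw [e, card_between X Z _ hXZ (Nat.le_add_right _ _)]
    have h1 : Z.card - X.card = 2 ^ τ * 2 := by omega
    have h2 : X.card + 2 ^ τ - X.card = 2 ^ τ := by omega
    rw [h1, h2]
    apply (CharP.cast_eq_zero_iff F 2 _).mpr
    apply Nat.dvd_of_mod_eq_zero
    rw [parity_pow τ, Nat.mul_div_cancel_left 2 (pow_pos (by norm_num) τ)]
  · have e : (Z.powerset.filter fun M => (M.card : ℤ) = b ∧ X ⊆ M) = ∅ := by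
      rw [Finset.filter_eq_empty_iff]
      intro M hM
      rw [Finset.mem_powerset] at hM
      rintro ⟨-, hXM⟩
      exact hXZ (hXM.trans hM)
    rw [e]
    simp

private lemma DD_zero (F : Type*) [Field F] [CharP F 2] (n τ : ℕ) (kz : ℤ) :
    (phi F n kz (kz - 2 ^ τ)).comp (phi F n (kz + 2 ^ τ) kz) = 0 := by
  apply lmap_ext
  intro Y X
  show cf (phi F n kz (kz - 2 ^ τ) (phi F n (kz + 2 ^ τ) kz (Finsupp.single Y 1))) X
    = cf (0 : FOmega F n (kz - 2 ^ τ)) X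
  rw [cf_zero, phi_phi_apply]
  have hcast : ((2 ^ τ : ℕ) : ℤ) = 2 ^ τ := by push_cast; ring
  have h1 := X.2
  have h2 := Y.2
  exact even_card_between τ X.1 Y.1 kz (by omega) (by omega)

private lemma UU_zero (F : Type*) [Field F] [CharP F 2] (n τ : ℕ) (kz : ℤ) :
    (phiStar F n (kz - 2 ^ τ) kz).comp (phiStar F n (kz - 2 ^ τ - 2 ^ τ) (kz - 2 ^ τ)) = 0 := by
  apply lmap_ext
  intro Y Z
  show cf (phiStar F n (kz - 2 ^ τ) kz
      (phiStar F n (kz - 2 ^ τ - 2 ^ τ) (kz - 2 ^ τ) (Finsupp.single Y 1))) Z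
    = cf (0 : FOmega F n kz) Z
  rw [cf_zero, phiStar_phiStar_apply]
  rw [card_subtype_between]
  have hcast : ((2 ^ τ : ℕ) : ℤ) = 2 ^ τ := by push_cast; ring
  have h1 := Y.2
  have h2 := Z.2
  exact even_card_between τ Y.1 Z.1 (kz - 2 ^ τ) (by omega) (by omega)

/-- over a field of characteristic two, with `t = 2^τ`,
`n ≡ 2k + t mod 2^{τ+1}`, `t ≤ k` and `k + t ≤ n`, we have
`FΩ_k = ker φ_t^k ⊕ im φ_t^{k⋆}` and `ker φ_t^k = im φ_t^{k+t}`. -/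
theorem splitExact (F : Type*) [Field F] [CharP F 2] (n k τ : ℕ)
    (htk : 2 ^ τ ≤ k) (hkn : k + 2 ^ τ ≤ n)
    (hmod : n % 2 ^ (τ + 1) = (2 * k + 2 ^ τ) % 2 ^ (τ + 1)) :
    IsCompl (LinearMap.ker (phi F n k ((k : ℤ) - 2 ^ τ)))
        (LinearMap.range (phiStar F n ((k : ℤ) - 2 ^ τ) k)) ∧
    LinearMap.ker (phi F n k ((k : ℤ) - 2 ^ τ)) =
      LinearMap.range (phi F n ((k : ℤ) + 2 ^ τ) k) := by
  classical
  have hcast : ((2 ^ τ : ℕ) : ℤ) = 2 ^ τ := by push_cast; ring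
  have hcast1 : ((2 ^ (τ + 1) : ℕ) : ℤ) = 2 ^ (τ + 1) := by push_cast; ring
  -- the two key identities and the two vanishing compositions
  have hI := key_identity F n τ (k : ℤ) (by omega)
    (by exact_mod_cast hmod)
  have hJ := key_identity F n τ ((k : ℤ) - 2 ^ τ) (by omega)
    (by
      have h1 : (n : ℤ) % 2 ^ (τ + 1) = (2 * (k : ℤ) + 2 ^ τ) % 2 ^ (τ + 1) := by
        exact_mod_cast hmod
      have e : 2 * ((k : ℤ) - 2 ^ τ) + 2 ^ τ = (2 * (k : ℤ) + 2 ^ τ) + 2 ^ (τ + 1) * (-1) := by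
        ring
      rw [e, Int.add_mul_emod_self_left]
      exact h1)
  have hDD := DD_zero F n τ (k : ℤ)
  have hUU := UU_zero F n τ (k : ℤ)
  have esub : (k : ℤ) - 2 ^ τ + 2 ^ τ = (k : ℤ) := by ring
  rw [esub] at hJ
  set D := phi F n (k : ℤ) ((k : ℤ) - 2 ^ τ) with hD
  set U := phiStar F n ((k : ℤ) - 2 ^ τ) (k : ℤ) with hU
  set D' := phi F n ((k : ℤ) + 2 ^ τ) (k : ℤ) with hD'
  set U' := phiStar F n (k : ℤ) ((k : ℤ) + 2 ^ τ) with hU'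
  have hIx : ∀ x : FOmega F n (k : ℤ), U (D x) + D' (U' x) = x := by
    intro x
    have := LinearMap.congr_fun hI x
    simpa using this
  have hkerrange : LinearMap.ker D = LinearMap.range D' := by
    apply le_antisymm
    · intro x hx
      rw [LinearMap.mem_ker] at hx
      have h1 := hIx x
      rw [hx, map_zero, zero_add] at h1
      exact ⟨U' x, h1⟩
    · rintro x ⟨y, rfl⟩
      rw [LinearMap.mem_ker]
      have := LinearMap.congr_fun hDD y
      simpa using this
  refine ⟨⟨?_, ?_⟩, hkerrange⟩
  · -- disjointness
    rw [Submodule.disjoint_def]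
    intro x hker hrange
    obtain ⟨y, rfl⟩ := hrange
    rw [LinearMap.mem_ker] at hker
    have hy := LinearMap.congr_fun hJ y
    simp only [LinearMap.add_apply, LinearMap.comp_apply, LinearMap.id_apply] at hy
    rw [hker, add_zero] at hy
    rw [← hy]
    have := LinearMap.congr_fun hUU
      ((phi F n ((k : ℤ) - 2 ^ τ) ((k : ℤ) - 2 ^ τ - 2 ^ τ)) y)
    simpa using this
  · -- codisjointness
    rw [codisjoint_iff, eq_top_iff]
    intro x _
    rw [Submodule.mem_sup]
    refine ⟨D' (U' x), ?_, U (D x), ⟨D x, rfl⟩, ?_⟩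
    · rw [hkerrange]
      exact ⟨U' x, rfl⟩
    · rw [add_comm]
      exact hIx x
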